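/- There exists a constant C > 0 such that for all integers n ≥ 2, |√n · Σ_{i=⌊√n⌋+1}^{2⌊√n⌋} 4·sin²(iπ/(2n)) − 7π²/3| ≤ C·n^{−1/2}. -/

import Mathlib

private lemma six_sum_sq (m : ℕ) :
    6 * ∑ i ∈ Finset.range (m + 1), i ^ 2 = m * (m + 1) * (2 * m + 1) := by
  induction m with
  | zero => simp
  | succ k ih =>
    rw [Finset.sum_range_succ, Nat.mul_add, ih]
    ring

private lemma sin_sq_close (x : ℝ) (hx0 : 0 < x) (hx1 : x ≤ 1) :
    |Real.sin x ^ 2 - x ^ 2| ≤ x ^ 4 / 2 := by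
  have h1 : Real.sin x < x := Real.sin_lt hx0
  have h2 : x - x ^ 3 / 4 < Real.sin x := lt_of_le_of_lt (by nlinarith [pow_pos hx0 3]) (Real.sin_gt_sub_cube hx0)
  have h3 : 0 ≤ Real.sin x :=
    Real.sin_nonneg_of_nonneg_of_le_pi hx0.le (by nlinarith [Real.pi_gt_three])
  rw [abs_le]
  constructor <;> nlinarith [sq_nonneg x, sq_nonneg (x - x ^ 3 / 4), sq_nonneg (x ^ 2)]

set_option maxHeartbeats 1000000 in
/-- Asymptotics of the eigenvalue sum:
`|√n · Σ_{i=⌊√n⌋+1}^{2⌊√n⌋} 4 sin²(iπ/(2n)) − 7π²/3| ≤ C·n^{−1/2}`. -/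
theorem eigenvalue_sum_asymptotics :
    ∃ C > (0:ℝ), ∀ n : ℕ, 2 ≤ n →
      |Real.sqrt n * ∑ i ∈ Finset.Icc (Nat.sqrt n + 1) (2 * Nat.sqrt n),
            4 * Real.sin ((i : ℝ) * Real.pi / (2 * n)) ^ 2
          - 7 * Real.pi ^ 2 / 3|
        ≤ C * (n : ℝ) ^ (-(1 : ℝ) / 2) := by
  refine ⟨300, by norm_num, ?_⟩
  intro n hn
  have hn0 : (0:ℝ) < n := by exact_mod_cast Nat.lt_of_lt_of_le (by norm_num) hn
  set s := Nat.sqrt n with hsdef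
  set r := Real.sqrt n with hrdef
  have hr0 : 0 < r := Real.sqrt_pos.mpr hn0
  have hr2 : r ^ 2 = n := Real.sq_sqrt hn0.le
  have hsr : (s:ℝ) ≤ r := by
    have h := Nat.sqrt_le' n
    have h' : ((s:ℝ)) ^ 2 ≤ (n:ℝ) := by exact_mod_cast h
    calc (s:ℝ) = Real.sqrt ((s:ℝ) ^ 2) := (Real.sqrt_sq (by positivity)).symm
      _ ≤ r := Real.sqrt_le_sqrt h'
  have hrs : r ≤ (s:ℝ) + 1 := by
    have h := Nat.lt_succ_sqrt' n
    have h' : (n:ℝ) ≤ ((s:ℝ) + 1) ^ 2 := by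
      have : (n:ℝ) ≤ ((s + 1 : ℕ) : ℝ) ^ 2 := by exact_mod_cast h.le
      simpa using this
    calc r ≤ Real.sqrt (((s:ℝ) + 1) ^ 2) := Real.sqrt_le_sqrt h'
      _ = (s:ℝ) + 1 := Real.sqrt_sq (by positivity)
  have hs1 : 1 ≤ s := by
    have : 1 * 1 ≤ n := by omega
    exact Nat.le_sqrt.mpr this
  have hrhs : (n : ℝ) ^ (-(1 : ℝ) / 2) = 1 / r := by
    rw [show (-(1:ℝ)/2) = -(1/2) by ring, Real.rpow_neg hn0.le, ← Real.sqrt_eq_rpow]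
    rw [one_div, hrdef]
  rw [hrhs]
  have hpi := Real.pi_pos
  have hpi315 : Real.pi < 3.15 := Real.pi_lt_d2
  have hpi2 : Real.pi ^ 2 ≤ 9.9225 := by nlinarith
  have hpi4 : Real.pi ^ 4 ≤ 98.46 := by nlinarith [sq_nonneg (Real.pi ^ 2)]
  set S := ∑ i ∈ Finset.Icc (s + 1) (2 * s),
      4 * Real.sin ((i : ℝ) * Real.pi / (2 * n)) ^ 2 with hSdef
  have hcard : (Finset.Icc (s + 1) (2 * s)).card = s := by
    rw [Nat.card_Icc]; omega
  by_cases hsmall : n < 10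
  · -- small case: crude bound
    have hn9 : (n:ℝ) ≤ 9 := by exact_mod_cast Nat.lt_succ_iff.mp hsmall
    have hr3 : r ≤ 3 := by
      calc r ≤ Real.sqrt 9 := Real.sqrt_le_sqrt hn9
        _ = 3 := by
          rw [show (9:ℝ) = 3 ^ 2 by norm_num]
          exact Real.sqrt_sq (by norm_num)
    have hS_le : S ≤ 4 * s := by
      have h := Finset.sum_le_card_nsmul (Finset.Icc (s + 1) (2 * s))
        (fun i => 4 * Real.sin ((i : ℝ) * Real.pi / (2 * n)) ^ 2) (4:ℝ)
        (fun i _ => by nlinarith [Real.sin_sq_le_one ((i : ℝ) * Real.pi / (2 * n))])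
      rw [hcard, nsmul_eq_mul] at h
      rw [hSdef]
      linarith
    have hS_nonneg : 0 ≤ S := by
      apply Finset.sum_nonneg
      intro i _
      positivity
    have h1 : r * S ≤ 36 := by nlinarith
    have h2 : 7 * Real.pi ^ 2 / 3 ≤ 24 := by nlinarith
    have h3 : (100:ℝ) ≤ 300 * (1 / r) := by
      rw [mul_one_div, le_div_iff₀ hr0]
      nlinarith
    rw [abs_le]
    constructor <;> nlinarith [mul_nonneg hr0.le hS_nonneg]
  · -- large case
    push_neg at hsmall
    have hn10 : (10:ℝ) ≤ n := by exact_mod_cast hsmall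
    have hr3 : 3 ≤ r := by nlinarith
    have hpr : Real.pi ≤ r := by nlinarith
    set T := ∑ i ∈ Finset.Icc (s + 1) (2 * s),
        Real.pi ^ 2 * (i : ℝ) ^ 2 / (n : ℝ) ^ 2 with hTdef
    -- per-term bound
    have hterm : ∀ i ∈ Finset.Icc (s + 1) (2 * s),
        |4 * Real.sin ((i : ℝ) * Real.pi / (2 * n)) ^ 2
          - Real.pi ^ 2 * (i : ℝ) ^ 2 / (n : ℝ) ^ 2| ≤ 2 * Real.pi ^ 4 / (n : ℝ) ^ 2 := by
      intro i hi
      rw [Finset.mem_Icc] at hi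
      have hi1 : (1:ℝ) ≤ (i:ℝ) := by exact_mod_cast Nat.one_le_iff_ne_zero.mpr (by omega)
      have hi2 : (i:ℝ) ≤ 2 * s := by exact_mod_cast hi.2
      set x := (i : ℝ) * Real.pi / (2 * n) with hxdef
      have hx0 : 0 < x := by positivity
      have hxle : x ≤ Real.pi / r := by
        rw [hxdef, div_le_div_iff₀ (by positivity) hr0]
        nlinarith [mul_le_mul_of_nonneg_right hi2 (by positivity : (0:ℝ) ≤ Real.pi * r),
          mul_le_mul_of_nonneg_right hsr (by positivity : (0:ℝ) ≤ 2 * Real.pi * r), hr2]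
      have hx1 : x ≤ 1 := by
        calc x ≤ Real.pi / r := hxle
          _ ≤ 1 := by rw [div_le_one hr0]; exact hpr
      have hkey := sin_sq_close x hx0 hx1
      have hx4 : x ^ 4 ≤ Real.pi ^ 4 / (n : ℝ) ^ 2 := by
        have h1 : x ^ 4 ≤ (Real.pi / r) ^ 4 := by
          apply pow_le_pow_left₀ hx0.le hxle
        calc x ^ 4 ≤ (Real.pi / r) ^ 4 := h1
          _ = Real.pi ^ 4 / (n : ℝ) ^ 2 := by
              rw [div_pow, ← hr2]; ring
      have h4x : 4 * x ^ 2 = Real.pi ^ 2 * (i : ℝ) ^ 2 / (n : ℝ) ^ 2 := by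
        rw [hxdef]; field_simp; ring
      calc |4 * Real.sin x ^ 2 - Real.pi ^ 2 * (i : ℝ) ^ 2 / (n : ℝ) ^ 2|
          = |4 * (Real.sin x ^ 2 - x ^ 2)| := by rw [← h4x]; ring_nf
        _ = 4 * |Real.sin x ^ 2 - x ^ 2| := by rw [abs_mul]; norm_num
        _ ≤ 4 * (x ^ 4 / 2) := by linarith
        _ = 2 * x ^ 4 := by ring
        _ ≤ 2 * Real.pi ^ 4 / (n : ℝ) ^ 2 := by
            rw [mul_div_assoc]; linarith
    -- sum bound
    have hsum : |S - T| ≤ (s : ℝ) * (2 * Real.pi ^ 4 / (n : ℝ) ^ 2) := by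
      rw [hSdef, hTdef, ← Finset.sum_sub_distrib]
      calc |∑ i ∈ Finset.Icc (s + 1) (2 * s),
            (4 * Real.sin ((i : ℝ) * Real.pi / (2 * n)) ^ 2
              - Real.pi ^ 2 * (i : ℝ) ^ 2 / (n : ℝ) ^ 2)|
          ≤ ∑ i ∈ Finset.Icc (s + 1) (2 * s),
            |4 * Real.sin ((i : ℝ) * Real.pi / (2 * n)) ^ 2
              - Real.pi ^ 2 * (i : ℝ) ^ 2 / (n : ℝ) ^ 2| :=
            Finset.abs_sum_le_sum_abs _ _
        _ ≤ (Finset.Icc (s + 1) (2 * s)).card • (2 * Real.pi ^ 4 / (n : ℝ) ^ 2) :=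
            Finset.sum_le_card_nsmul _ _ _ hterm
        _ = (s : ℝ) * (2 * Real.pi ^ 4 / (n : ℝ) ^ 2) := by
            rw [hcard, nsmul_eq_mul]
    -- exact value of T
    have hsplit : (∑ i ∈ Finset.range (s + 1), i ^ 2)
        + ∑ i ∈ Finset.Icc (s + 1) (2 * s), i ^ 2
        = ∑ i ∈ Finset.range (2 * s + 1), i ^ 2 := by
      rw [show Finset.Icc (s + 1) (2 * s) = Finset.Ico (s + 1) (2 * s + 1) from
        (Finset.Ico_add_one_right_eq_Icc _ _).symm]
      simp only [Finset.range_eq_Ico]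
      exact Finset.sum_Ico_consecutive _ (by omega) (by omega)
    have hA := six_sum_sq (2 * s)
    have hB := six_sum_sq s
    have hA' : 6 * (∑ i ∈ Finset.range (2 * s + 1), (i : ℝ) ^ 2)
        = 2 * (s:ℝ) * (2 * s + 1) * (2 * (2 * s) + 1) := by exact_mod_cast hA
    have hB' : 6 * (∑ i ∈ Finset.range (s + 1), (i : ℝ) ^ 2)
        = (s:ℝ) * (s + 1) * (2 * s + 1) := by exact_mod_cast hB
    have hsplit' : (∑ i ∈ Finset.range (s + 1), (i : ℝ) ^ 2)
        + ∑ i ∈ Finset.Icc (s + 1) (2 * s), (i : ℝ) ^ 2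
        = ∑ i ∈ Finset.range (2 * s + 1), (i : ℝ) ^ 2 := by exact_mod_cast hsplit
    have hkey : (∑ i ∈ Finset.Icc (s + 1) (2 * s), (i : ℝ) ^ 2)
        = (14 * (s:ℝ) ^ 3 + 9 * (s:ℝ) ^ 2 + s) / 6 := by
      linear_combination hsplit' + hA' / 6 - hB' / 6
    have hT : T = Real.pi ^ 2 * (14 * (s:ℝ) ^ 3 + 9 * (s:ℝ) ^ 2 + s) / (6 * (n : ℝ) ^ 2) := by
      rw [hTdef]
      rw [show (∑ i ∈ Finset.Icc (s + 1) (2 * s), Real.pi ^ 2 * (i : ℝ) ^ 2 / (n : ℝ) ^ 2)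
          = (Real.pi ^ 2 / (n : ℝ) ^ 2) * ∑ i ∈ Finset.Icc (s + 1) (2 * s), (i : ℝ) ^ 2 by
        rw [Finset.mul_sum]; exact Finset.sum_congr rfl fun i _ => by ring]
      rw [hkey]; ring
    -- now the final estimate
    have hn_eq : (n : ℝ) = r ^ 2 := hr2.symm
    have h1 : |r * S - r * T| ≤ 66 / r := by
      rw [← mul_sub, abs_mul, abs_of_pos hr0]
      have : r * |S - T| ≤ r * ((s : ℝ) * (2 * Real.pi ^ 4 / (n : ℝ) ^ 2)) := by
        apply mul_le_mul_of_nonneg_left hsum hr0.le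
      calc r * |S - T| ≤ r * ((s : ℝ) * (2 * Real.pi ^ 4 / (n : ℝ) ^ 2)) := this
        _ ≤ 66 / r := by
            rw [hn_eq, le_div_iff₀ hr0]
            have hexp : r * (↑s * (2 * Real.pi ^ 4 / (r ^ 2) ^ 2)) * r
                = 2 * Real.pi ^ 4 * s / r ^ 2 := by
              field_simp
            rw [hexp, div_le_iff₀ (by positivity)]
            nlinarith [mul_le_mul_of_nonneg_right hsr
              (by positivity : (0:ℝ) ≤ 2 * Real.pi ^ 4),
              mul_le_mul_of_nonneg_left hr3 hr0.le,
              mul_le_mul_of_nonneg_right hpi4 hr0.le]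
    have hcube : r ^ 3 - (s:ℝ) ^ 3 ≤ 3 * r ^ 2 := by
      nlinarith [mul_nonneg (by linarith : (0:ℝ) ≤ (s:ℝ) + 1 - r)
        (by positivity : (0:ℝ) ≤ r ^ 2 + r * s + (s:ℝ) ^ 2),
        mul_nonneg (Nat.cast_nonneg s : (0:ℝ) ≤ s) hr0.le]
    have hv : |14 * (s:ℝ) ^ 3 + 9 * (s:ℝ) ^ 2 + s - 14 * r ^ 3| ≤ 42 * r ^ 2 := by
      rw [abs_le]
      have hs0 : (0:ℝ) ≤ s := Nat.cast_nonneg s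
      constructor
      · nlinarith
      · nlinarith [mul_le_mul_of_nonneg_left hsr hs0, mul_le_mul_of_nonneg_right hsr hs0]
    have h2 : |r * T - 7 * Real.pi ^ 2 / 3| ≤ 70 / r := by
      have heq : r * T - 7 * Real.pi ^ 2 / 3
          = Real.pi ^ 2 * (14 * (s:ℝ) ^ 3 + 9 * (s:ℝ) ^ 2 + s - 14 * r ^ 3) / (6 * r ^ 3) := by
        rw [hT, hn_eq]
        field_simp
        ring
      rw [heq, abs_div, abs_mul, abs_of_pos (by positivity : (0:ℝ) < Real.pi ^ 2),
        abs_of_pos (by positivity : (0:ℝ) < 6 * r ^ 3)]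
      calc Real.pi ^ 2 * |14 * (s:ℝ) ^ 3 + 9 * (s:ℝ) ^ 2 + s - 14 * r ^ 3| / (6 * r ^ 3)
          ≤ Real.pi ^ 2 * (42 * r ^ 2) / (6 * r ^ 3) := by gcongr
        _ = 7 * Real.pi ^ 2 / r := by field_simp; ring
        _ ≤ 70 / r := by gcongr; nlinarith
    calc |r * S - 7 * Real.pi ^ 2 / 3|
        ≤ |r * S - r * T| + |r * T - 7 * Real.pi ^ 2 / 3| := by
          have := abs_sub_le (r * S) (r * T) (7 * Real.pi ^ 2 / 3)
          linarith
      _ ≤ 66 / r + 70 / r := by linarith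
      _ ≤ 300 * (1 / r) := by rw [mul_one_div]; rw [← add_div]; gcongr <;> norm_num
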